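/- Let F_q be a finite field with q elements and let J be any ideal of the polynomial ring F_q[x_1,...,x_n]. Then the ideal J + ⟨x_1^q − x_1, ..., x_n^q − x_n⟩ is a radical ideal, i.e., it equals its own radical. -/

import Mathlib

open MvPolynomial

theorem radical_of_add_span_fieldPolynomials
    {F : Type*} [Field F] [Fintype F] {q : ℕ} (hq : Fintype.card F = q)
    (n : ℕ) (J : Ideal (MvPolynomial (Fin n) F)) :
    (J + Ideal.span (Set.range fun i : Fin n =>
        (X i : MvPolynomial (Fin n) F) ^ q - X i)).radical
      = J + Ideal.span (Set.range fun i : Fin n =>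
        (X i : MvPolynomial (Fin n) F) ^ q - X i) := by
  set I : Ideal (MvPolynomial (Fin n) F) :=
    J + Ideal.span (Set.range fun i : Fin n =>
        (X i : MvPolynomial (Fin n) F) ^ q - X i) with hI
  obtain ⟨k, hp, hcard⟩ := FiniteField.card F (ringChar F)
  haveI : Fact (Nat.Prime (ringChar F)) := ⟨hp⟩
  have hqpow : q = ringChar F ^ (k : ℕ) := by rw [← hq, hcard]
  -- key: f^q - f ∈ I for all f
  have key : ∀ f : MvPolynomial (Fin n) F, f ^ q - f ∈ I := by
    intro f
    induction f using MvPolynomial.induction_on with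
    | C a =>
      have : (C a : MvPolynomial (Fin n) F) ^ q - C a = 0 := by
        rw [← map_pow, ← map_sub, ← hq, FiniteField.pow_card, sub_self, map_zero]
      rw [this]; exact zero_mem I
    | add f g hf hg =>
      have : (f + g) ^ q - (f + g) = (f ^ q - f) + (g ^ q - g) := by
        rw [hqpow, add_pow_char_pow]; ring
      rw [this]; exact add_mem hf hg
    | mul_X f i hf =>
      have hx : (X i : MvPolynomial (Fin n) F) ^ q - X i ∈ I := by
        apply Ideal.mem_sup_right
        exact Ideal.subset_span ⟨i, rfl⟩
      have : (f * X i) ^ q - f * X i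
          = f ^ q * ((X i) ^ q - X i) + ((f ^ q - f) * X i) := by ring
      rw [this]
      exact add_mem (Ideal.mul_mem_left _ _ hx) (Ideal.mul_mem_right _ _ hf)
  -- iterate: f^(q^m) - f ∈ I
  have key2 : ∀ (m : ℕ) (f : MvPolynomial (Fin n) F), f ^ q ^ m - f ∈ I := by
    intro m
    induction m with
    | zero => intro f; simp
    | succ m ih =>
      intro f
      have h1 : f ^ q ^ (m + 1) - (f ^ q) ^ q ^ m = 0 := by
        rw [← pow_mul, ← pow_succ']
        ring_nf
      have h2 : (f ^ q) ^ q ^ m - f ^ q ∈ I := ih (f ^ q)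
      have h3 : f ^ q - f ∈ I := key f
      have : f ^ q ^ (m + 1) - f
          = (f ^ q ^ (m + 1) - (f ^ q) ^ q ^ m) + ((f ^ q) ^ q ^ m - f ^ q) + (f ^ q - f) := by
        ring
      rw [this, h1, zero_add]
      exact add_mem h2 h3
  have hq2 : 2 ≤ q := by
    rw [← hq]; exact Fintype.one_lt_card
  refine le_antisymm ?_ Ideal.le_radical
  intro f hf
  obtain ⟨m, hm⟩ := hf
  have hmle : m ≤ q ^ m := le_trans (Nat.le_of_lt (Nat.lt_two_pow_self (n := m)))
    (Nat.pow_le_pow_left hq2 m)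
  have h1 : f ^ q ^ m ∈ I := by
    have : f ^ q ^ m = f ^ m * f ^ (q ^ m - m) := by
      rw [← pow_add, Nat.add_sub_cancel' hmle]
    rw [this]
    exact Ideal.mul_mem_right _ _ hm
  have h2 : f ^ q ^ m - f ∈ I := key2 m f
  have : f = f ^ q ^ m - (f ^ q ^ m - f) := by ring
  rw [this]
  exact sub_mem h1 h2
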